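/- The category of pastures has coequalizers: for any pastures P₁, P₂ and any morphisms of pastures f, g : P₁ → P₂, there exists a pasture Q together with a morphism of pastures q : P₂ → Q with q ∘ f = q ∘ g, such that for every pasture Q' with a morphism q' : P₂ → Q' satisfying q' ∘ f = q' ∘ g there is a unique morphism of pastures u : Q → Q' with u ∘ q = q'. -/
import Mathlib


universe u v w

/-- A pasture structure on a type `P`: a multiplication, a zero, a one,
an involution `neg`, and a ternary nullset relation `null a b c`
(meaning "`a + b + c = 0`"). -/
structure PastureStr (P : Type u) where
  mul : P → P → P
  zero : P
  one : P
  neg : P → P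
  null : P → P → P → Prop

/-- `P` together with a `PastureStr` is a pasture: `P` is a commutative
monoid with zero whose nonzero elements form an abelian group, `neg` is an
involution fixing `0`, and the nullset is invariant under permutations,
invariant under multiplication, and satisfies `a + b + 0 = 0 ↔ a = -b`. -/
structure PastureStr.IsPasture {P : Type u} (S : PastureStr P) : Prop where
  mul_comm : ∀ a b : P, S.mul a b = S.mul b a
  mul_assoc : ∀ a b c : P, S.mul (S.mul a b) c = S.mul a (S.mul b c)
  one_mul : ∀ a : P, S.mul S.one a = a
  zero_mul : ∀ a : P, S.mul S.zero a = S.zero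
  one_ne_zero : S.one ≠ S.zero
  mul_ne_zero : ∀ a b : P, a ≠ S.zero → b ≠ S.zero → S.mul a b ≠ S.zero
  exists_inv : ∀ a : P, a ≠ S.zero → ∃ b : P, S.mul a b = S.one
  neg_neg : ∀ a : P, S.neg (S.neg a) = a
  neg_zero : S.neg S.zero = S.zero
  null_swap_left : ∀ a b c : P, S.null a b c → S.null b a c
  null_swap_right : ∀ a b c : P, S.null a b c → S.null a c b
  null_mul : ∀ d a b c : P, S.null a b c → S.null (S.mul d a) (S.mul d b) (S.mul d c)
  null_zero : ∀ a b : P, S.null a b S.zero ↔ a = S.neg b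

/-- A morphism of pastures: a multiplicative map preserving `0`, `1`,
the involution and the nullset. -/
structure PastureStr.IsHom {P : Type u} {P' : Type v} (S : PastureStr P) (T : PastureStr P')
    (f : P → P') : Prop where
  map_mul : ∀ a b : P, f (S.mul a b) = T.mul (f a) (f b)
  map_zero : f S.zero = T.zero
  map_one : f S.one = T.one
  map_neg : ∀ a : P, f (S.neg a) = T.neg (f a)
  map_null : ∀ a b c : P, S.null a b c → T.null (f a) (f b) (f c)


/-- The multiplicative congruence on `P₂` generated by `f x ~ g x`. -/
inductive PRel {P₁ : Type u} {P₂ : Type v} (S₂ : PastureStr P₂) (f g : P₁ → P₂) :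
    P₂ → P₂ → Prop
  | of (x : P₁) : PRel S₂ f g (f x) (g x)
  | refl (a : P₂) : PRel S₂ f g a a
  | symm {a b : P₂} : PRel S₂ f g a b → PRel S₂ f g b a
  | trans {a b c : P₂} : PRel S₂ f g a b → PRel S₂ f g b c → PRel S₂ f g a c
  | mul_left (d : P₂) {a b : P₂} : PRel S₂ f g a b → PRel S₂ f g (S₂.mul d a) (S₂.mul d b)

def pastureSetoid {P₁ : Type u} {P₂ : Type v} (S₂ : PastureStr P₂) (f g : P₁ → P₂) :
    Setoid P₂ :=
  ⟨PRel S₂ f g, ⟨PRel.refl, PRel.symm, PRel.trans⟩⟩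

section CoeqAux

variable {P₁ : Type u} {P₂ : Type v} {S₁ : PastureStr P₁} {S₂ : PastureStr P₂}
  {f g : P₁ → P₂}

theorem pasture_mul_eq_zero (hS₂ : S₂.IsPasture) (a b : P₂) :
    S₂.mul a b = S₂.zero ↔ a = S₂.zero ∨ b = S₂.zero := by
  constructor
  · intro h
    by_contra hc
    push_neg at hc
    exact hS₂.mul_ne_zero a b hc.1 hc.2 h
  · rintro (rfl | rfl)
    · exact hS₂.zero_mul b
    · rw [hS₂.mul_comm]; exact hS₂.zero_mul a

theorem pasture_hom_zero_iff (hS₁ : S₁.IsPasture) (hS₂ : S₂.IsPasture)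
    (hf : S₁.IsHom S₂ f) (x : P₁) : f x = S₂.zero ↔ x = S₁.zero := by
  constructor
  · intro h
    by_contra hx
    obtain ⟨y, hy⟩ := hS₁.exists_inv x hx
    have h1 : f (S₁.mul x y) = S₂.one := by rw [hy, hf.map_one]
    rw [hf.map_mul, h, hS₂.zero_mul] at h1
    exact hS₂.one_ne_zero h1.symm
  · rintro rfl; exact hf.map_zero

theorem pasture_neg_eq (hS₂ : S₂.IsPasture) (a : P₂) :
    S₂.neg a = S₂.mul a (S₂.neg S₂.one) := by
  have h1 : S₂.null S₂.one (S₂.neg S₂.one) S₂.zero :=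
    (hS₂.null_zero _ _).mpr (hS₂.neg_neg _).symm
  have h2 := hS₂.null_mul a _ _ _ h1
  rw [hS₂.mul_comm a S₂.one, hS₂.one_mul, hS₂.mul_comm a S₂.zero, hS₂.zero_mul] at h2
  have h3 := (hS₂.null_zero _ _).mp h2
  calc S₂.neg a = S₂.neg (S₂.neg (S₂.mul a (S₂.neg S₂.one))) := congrArg S₂.neg h3
    _ = _ := hS₂.neg_neg _

theorem PRel.zero_iff (hS₁ : S₁.IsPasture) (hS₂ : S₂.IsPasture)
    (hf : S₁.IsHom S₂ f) (hg : S₁.IsHom S₂ g) {a b : P₂}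
    (h : PRel S₂ f g a b) : (a = S₂.zero ↔ b = S₂.zero) := by
  induction h with
  | of x =>
    rw [pasture_hom_zero_iff hS₁ hS₂ hf, pasture_hom_zero_iff hS₁ hS₂ hg]
  | refl a => exact Iff.rfl
  | symm _ ih => exact ih.symm
  | trans _ _ ih₁ ih₂ => exact ih₁.trans ih₂
  | mul_left d _ ih =>
    rw [pasture_mul_eq_zero hS₂, pasture_mul_eq_zero hS₂, ih]

theorem PRel.neg (hS₂ : S₂.IsPasture) {a b : P₂} (h : PRel S₂ f g a b) :
    PRel S₂ f g (S₂.neg a) (S₂.neg b) := by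
  rw [pasture_neg_eq hS₂ a, pasture_neg_eq hS₂ b, hS₂.mul_comm a, hS₂.mul_comm b]
  exact h.mul_left _

theorem PRel.mul {a b c d : P₂} (h₁ : PRel S₂ f g a b) (h₂ : PRel S₂ f g c d)
    (hS₂ : S₂.IsPasture) : PRel S₂ f g (S₂.mul a c) (S₂.mul b d) := by
  refine PRel.trans (PRel.mul_left a h₂) ?_
  rw [hS₂.mul_comm a d, hS₂.mul_comm b d]
  exact PRel.mul_left d h₁

end CoeqAux

/-- **The category of pastures has coequalizers.**
For pastures `P₁, P₂` and morphisms `f, g : P₁ → P₂` there is a pasture `Q`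
with a morphism `q : P₂ → Q` satisfying `q ∘ f = q ∘ g`, such that for every
pasture `Q'` with a morphism `q' : P₂ → Q'` satisfying `q' ∘ f = q' ∘ g`
there is a unique morphism `u : Q → Q'` with `u ∘ q = q'`. -/
theorem pastures_have_coequalizers
    {P₁ P₂ : Type u} (S₁ : PastureStr P₁) (S₂ : PastureStr P₂)
    (hS₁ : S₁.IsPasture) (hS₂ : S₂.IsPasture)
    (f g : P₁ → P₂) (hf : S₁.IsHom S₂ f) (hg : S₁.IsHom S₂ g) :
    ∃ (Q : Type u) (SQ : PastureStr Q), SQ.IsPasture ∧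
      ∃ q : P₂ → Q, PastureStr.IsHom S₂ SQ q ∧ q ∘ f = q ∘ g ∧
        ∀ (Q' : Type v) (S' : PastureStr Q'), S'.IsPasture →
          ∀ q' : P₂ → Q', PastureStr.IsHom S₂ S' q' → q' ∘ f = q' ∘ g →
            ∃! u : Q → Q', PastureStr.IsHom SQ S' u ∧ u ∘ q = q' := by
  classical
  set sd : Setoid P₂ := pastureSetoid S₂ f g with hsd
  have hrel : ∀ {a b : P₂}, (a ≈ b) = PRel S₂ f g a b := fun {a b} => rfl
  -- the quotient pasture structure
  refine ⟨Quotient sd, ?_, ?_, ?_⟩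
  pick_goal 1
  · exact
    { mul := Quotient.lift₂ (fun a b => Quotient.mk sd (S₂.mul a b))
        (fun a b a' b' ha hb => Quotient.sound ((PRel.mul ha hb hS₂ : _)))
      zero := Quotient.mk sd S₂.zero
      one := Quotient.mk sd S₂.one
      neg := Quotient.map S₂.neg (fun a b h => PRel.neg hS₂ h)
      null := fun x y z => ∃ a b c, x = Quotient.mk sd a ∧ y = Quotient.mk sd b ∧
        z = Quotient.mk sd c ∧ S₂.null a b c }
  -- IsPasture
  · constructor
    · intro x y
      induction x using Quotient.ind; induction y using Quotient.ind
      exact congrArg _ (hS₂.mul_comm _ _)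
    · intro x y z
      induction x using Quotient.ind; induction y using Quotient.ind
      induction z using Quotient.ind
      exact congrArg _ (hS₂.mul_assoc _ _ _)
    · intro x; induction x using Quotient.ind
      exact congrArg _ (hS₂.one_mul _)
    · intro x; induction x using Quotient.ind
      exact congrArg _ (hS₂.zero_mul _)
    · intro h
      exact hS₂.one_ne_zero
        ((PRel.zero_iff hS₁ hS₂ hf hg (Quotient.exact h)).mpr rfl)
    · intro x y hx hy h
      induction x using Quotient.ind with | _ a => ?_
      induction y using Quotient.ind with | _ b => ?_
      have ha : a ≠ S₂.zero := fun h0 => hx (congrArg _ h0)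
      have hb : b ≠ S₂.zero := fun h0 => hy (congrArg _ h0)
      exact hS₂.mul_ne_zero a b ha hb
        ((PRel.zero_iff hS₁ hS₂ hf hg (Quotient.exact h)).mpr rfl)
    · intro x hx
      induction x using Quotient.ind with | _ a => ?_
      have ha : a ≠ S₂.zero := fun h0 => hx (congrArg _ h0)
      obtain ⟨b, hb⟩ := hS₂.exists_inv a ha
      exact ⟨Quotient.mk sd b, congrArg _ hb⟩
    · intro x; induction x using Quotient.ind
      exact congrArg _ (hS₂.neg_neg _)
    · exact congrArg _ hS₂.neg_zero
    · rintro x y z ⟨a, b, c, rfl, rfl, rfl, h⟩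
      exact ⟨b, a, c, rfl, rfl, rfl, hS₂.null_swap_left _ _ _ h⟩
    · rintro x y z ⟨a, b, c, rfl, rfl, rfl, h⟩
      exact ⟨a, c, b, rfl, rfl, rfl, hS₂.null_swap_right _ _ _ h⟩
    · rintro d x y z ⟨a, b, c, rfl, rfl, rfl, h⟩
      induction d using Quotient.ind with | _ d₀ => ?_
      exact ⟨S₂.mul d₀ a, S₂.mul d₀ b, S₂.mul d₀ c, rfl, rfl, rfl,
        hS₂.null_mul d₀ _ _ _ h⟩
    · intro x y
      constructor
      · rintro ⟨a, b, c, rfl, rfl, hc, h⟩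
        have : c = S₂.zero :=
          (PRel.zero_iff hS₁ hS₂ hf hg (Quotient.exact hc)).mp rfl
        subst this
        have := (hS₂.null_zero a b).mp h
        subst this
        rfl
      · intro h
        induction y using Quotient.ind with | _ b => ?_
        subst h
        exact ⟨S₂.neg b, b, S₂.zero, rfl, rfl, rfl,
          (hS₂.null_zero _ _).mpr rfl⟩
  -- the quotient map and universal property
  · refine ⟨Quotient.mk sd, ?_, ?_, ?_⟩
    · exact
      { map_mul := fun a b => rfl
        map_zero := rfl
        map_one := rfl
        map_neg := fun a => rfl
        map_null := fun a b c h => ⟨a, b, c, rfl, rfl, rfl, h⟩ }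
    · funext x
      exact Quotient.sound (PRel.of x)
    · intro Q' S' hS' q' hq' hco
      have hresp : ∀ a b : P₂, a ≈ b → q' a = q' b := by
        intro a b h
        rw [hrel] at h
        induction h with
        | of x => exact congrFun hco x
        | refl a => rfl
        | symm _ ih => exact ih.symm
        | trans _ _ ih₁ ih₂ => exact ih₁.trans ih₂
        | mul_left d _ ih => rw [hq'.map_mul, hq'.map_mul, ih]
      refine ⟨Quotient.lift q' hresp, ⟨?_, funext fun x => rfl⟩, ?_⟩
      · constructor
        · intro x y
          induction x using Quotient.ind; induction y using Quotient.ind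
          exact hq'.map_mul _ _
        · exact hq'.map_zero
        · exact hq'.map_one
        · intro x; induction x using Quotient.ind
          exact hq'.map_neg _
        · rintro x y z ⟨a, b, c, rfl, rfl, rfl, h⟩
          exact hq'.map_null _ _ _ h
      · rintro v ⟨hv, hvq⟩
        funext x
        induction x using Quotient.ind with | _ a => ?_
        exact congrFun hvq a
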